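/- Let D be a non-commutative division ring of characteristic 0 that is weakly locally finite, with center F. Then no subgroup N of GL_n(D) containing the scalar matrices F*·I is finitely generated. (Characteristic 0 case: ℚ* embeds, modulo a finite torsion subgroup, into the finitely generated abelian group F*N'/N', contradiction since ℚ* is not finitely generated.) -/

import Mathlib

/-- A division ring is weakly locally finite if every finite subset generates a
division subring which is finite-dimensional over its own center. -/
def IsWeaklyLocallyFinite (D : Type*) [DivisionRing D] : Prop :=
  ∀ S : Finset D,
    Module.Finite (Subring.center (Subfield.closure (S : Set D)))
      (Subfield.closure (S : Set D))

lemma ratUnits_not_fg : ¬ Group.FG ℚˣ := by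
  intro h
  obtain ⟨S, hS⟩ := h.out
  set m := (S.sup fun q => (q : ℚ).num.natAbs ⊔ (q : ℚ).den) + 1 with hm
  obtain ⟨p, hpm, hp⟩ := Nat.exists_infinite_primes m
  haveI : Fact p.Prime := ⟨hp⟩
  let f : ℚˣ →* Multiplicative ℤ :=
  { toFun := fun q => Multiplicative.ofAdd (padicValRat p (q : ℚ))
    map_one' := by simp
    map_mul' := fun a b => by
      simp only [Units.val_mul, padicValRat.mul a.ne_zero b.ne_zero, ofAdd_add] }
  have hSker : (S : Set ℚˣ) ⊆ (MonoidHom.ker f : Set ℚˣ) := by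
    intro q hq
    have hsup : (q : ℚ).num.natAbs ⊔ (q : ℚ).den ≤ m - 1 := by
      rw [hm, Nat.add_sub_cancel]
      exact Finset.le_sup (f := fun q : ℚˣ => (q : ℚ).num.natAbs ⊔ (q : ℚ).den) hq
    have hnum : ¬ p ∣ (q : ℚ).num.natAbs := by
      intro hdvd
      have h0 : (q : ℚ).num.natAbs ≠ 0 := by
        simpa [Int.natAbs_eq_zero, Rat.num_eq_zero] using q.ne_zero
      have := Nat.le_of_dvd (Nat.pos_of_ne_zero h0) hdvd
      omega
    have hden : ¬ p ∣ (q : ℚ).den := by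
      intro hdvd
      have := Nat.le_of_dvd (q : ℚ).pos hdvd
      omega
    have : padicValRat p (q : ℚ) = 0 := by
      rw [padicValRat_def, padicValInt, padicValNat.eq_zero_of_not_dvd hnum,
        padicValNat.eq_zero_of_not_dvd hden]
      simp
    show f q = 1
    simp only [f, MonoidHom.coe_mk, OneHom.coe_mk, this, ofAdd_zero]
  have hker : Subgroup.closure (S : Set ℚˣ) ≤ MonoidHom.ker f :=
    (Subgroup.closure_le _).mpr hSker
  have hpne : ((p : ℚ)) ≠ 0 := by exact_mod_cast hp.ne_zero
  let u : ℚˣ := Units.mk0 (p : ℚ) hpne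
  have hu : f u = 1 := hker (hS ▸ Subgroup.mem_top u)
  have : padicValRat p (u : ℚ) = 1 := by
    simpa [u] using padicValRat.self (p := p) hp.one_lt
  rw [show f u = Multiplicative.ofAdd (padicValRat p (u : ℚ)) from rfl, this] at hu
  exact one_ne_zero (Multiplicative.ofAdd.injective (hu.trans (ofAdd_zero).symm)) |>.elim

noncomputable def delta {K : Type*} [DivisionRing K] {n : ℕ} :
    Matrix (Fin n) (Fin n) K →* Subring.center K where
  toFun M := LinearMap.det (LinearMap.mulLeft (Subring.center K) M)
  map_one' := by rw [LinearMap.mulLeft_one]; exact LinearMap.det_id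
  map_mul' a b := by rw [LinearMap.mulLeft_mul]; exact LinearMap.det_comp _ _

lemma delta_smul_one {K : Type*} [DivisionRing K] {n : ℕ} (d : K) (hd : d ∈ Subring.center K) :
    delta (d • (1 : Matrix (Fin n) (Fin n) K)) =
      (⟨d, hd⟩ : Subring.center K) ^ Module.finrank (Subring.center K) (Matrix (Fin n) (Fin n) K) := by
  have h1 : LinearMap.mulLeft (Subring.center K) (d • (1 : Matrix (Fin n) (Fin n) K)) =
      (⟨d, hd⟩ : Subring.center K) • LinearMap.id := by
    ext x i j
    simp [LinearMap.mulLeft_apply, smul_mul_assoc, Matrix.smul_apply, Subring.smul_def]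
  rw [delta, MonoidHom.coe_mk, OneHom.coe_mk, h1, LinearMap.det_smul, LinearMap.det_id, mul_one]

open scoped commutatorElement in
set_option maxHeartbeats 1000000 in
set_option synthInstance.maxHeartbeats 200000 in
lemma torsion_of_scalar_in_commutator {D : Type*} [DivisionRing D]
    (hD : IsWeaklyLocallyFinite D) {n : ℕ} (hn : 0 < n) {d : D}
    (hd : d ∈ Subring.center D) {z : (Matrix (Fin n) (Fin n) D)ˣ}
    (hzv : z.val = d • 1)
    (hz : z ∈ commutator (Matrix (Fin n) (Fin n) D)ˣ) :
    ∃ m : ℕ, 0 < m ∧ d ^ m = 1 := by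
  classical
  -- z as a product of commutators
  rw [commutator_eq_closure] at hz
  have hz' : z ∈ Submonoid.closure (commutatorSet (Matrix (Fin n) (Fin n) D)ˣ ∪ (commutatorSet (Matrix (Fin n) (Fin n) D)ˣ)⁻¹) := by
    have h2 := Subgroup.closure_toSubmonoid (commutatorSet (Matrix (Fin n) (Fin n) D)ˣ)
    have h3 : z ∈ (Subgroup.closure (commutatorSet (Matrix (Fin n) (Fin n) D)ˣ)).toSubmonoid := hz
    rw [h2] at h3; exact h3
  obtain ⟨l, hl, hlprod⟩ := Submonoid.exists_list_of_mem_closure hz'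
  have hl' : ∀ y ∈ l, y ∈ commutatorSet (Matrix (Fin n) (Fin n) D)ˣ := by
    intro y hy
    rcases hl y hy with h | h
    · exact h
    · obtain ⟨a, b, hab⟩ := Set.mem_inv.mp h
      exact ⟨b, a, by rw [← commutatorElement_inv, hab, inv_inv]⟩
  -- choice of commutator decompositions
  obtain ⟨A, B, hAB⟩ : ∃ A B : (Matrix (Fin n) (Fin n) D)ˣ → (Matrix (Fin n) (Fin n) D)ˣ,
      ∀ y ∈ l, y = ⁅A y, B y⁆ := by
    refine ⟨fun y => if h : y ∈ commutatorSet (Matrix (Fin n) (Fin n) D)ˣ then h.choose else 1,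
      fun y => if h : y ∈ commutatorSet (Matrix (Fin n) (Fin n) D)ˣ then h.choose_spec.choose else 1,
      fun y hy => ?_⟩
    have h := hl' y hy
    simp only [dif_pos h]
    exact (h.choose_spec.choose_spec).symm
  -- the finite set of relevant entries
  let eset : (Matrix (Fin n) (Fin n) D)ˣ → Set D := fun g => Set.range fun p : Fin n × Fin n =>
    g.val p.1 p.2
  let ent : (Matrix (Fin n) (Fin n) D)ˣ → Set D := fun y =>
    eset (A y) ∪ eset ((A y)⁻¹) ∪ eset (B y) ∪ eset ((B y)⁻¹)
  let T : Set D := insert d (⋃ y ∈ l.toFinset, ent y)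
  have hTfin : T.Finite := by
    refine Set.Finite.insert d ?_
    refine Set.Finite.biUnion l.toFinset.finite_toSet fun y _ => ?_
    exact (((Set.finite_range _).union (Set.finite_range _)).union
      (Set.finite_range _)).union (Set.finite_range _)
  obtain ⟨K, hmemK, hfin⟩ : ∃ K : Subfield D, (∀ x ∈ T, x ∈ K) ∧
      Module.Finite (Subring.center K) K := by
    refine ⟨Subfield.closure (hTfin.toFinset : Set D), fun x hx => Subfield.subset_closure ?_,
      hD hTfin.toFinset⟩
    rwa [hTfin.coe_toFinset]
  haveI := hfin
  have hdK : d ∈ K := hmemK d (Set.mem_insert _ _)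
  -- the embedding of matrices over K into matrices over D
  let ι : Matrix (Fin n) (Fin n) K →+* Matrix (Fin n) (Fin n) D :=
    (Subfield.subtype K).mapMatrix
  have hιinj : Function.Injective ι := fun M1 M2 h => by
    ext i j
    have := congrFun (congrFun (congrArg (fun M => (M : Matrix (Fin n) (Fin n) D)) h) i) j
    simpa [ι, Matrix.map_apply] using Subtype.ext this
  have hlift : ∀ (M : Matrix (Fin n) (Fin n) D), (∀ i j, M i j ∈ K) →
      ∃ w : Matrix (Fin n) (Fin n) K, ι w = M := by
    intro M h
    exact ⟨Matrix.of fun i j => (⟨M i j, h i j⟩ : K), by ext i j; simp [ι, Matrix.map_apply]⟩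
  -- each commutator factor lifts with trivial delta
  have key : ∀ y ∈ l, ∃ w : Matrix (Fin n) (Fin n) K,
      ι w = y.val ∧ delta w = 1 := by
    intro y hy
    have hmem : ∀ g : (Matrix (Fin n) (Fin n) D)ˣ, eset g ⊆ ent y → ∀ i j, g.val i j ∈ K := by
      intro g hsub i j
      exact hmemK _ (Set.mem_insert_of_mem _
        (Set.mem_biUnion (List.mem_toFinset.mpr hy) (hsub ⟨(i, j), rfl⟩)))
    obtain ⟨wa, hwa⟩ := hlift _ (hmem (A y) (fun x hx => Or.inl (Or.inl (Or.inl hx))))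
    obtain ⟨wai, hwai⟩ := hlift _ (hmem ((A y)⁻¹) (fun x hx => Or.inl (Or.inl (Or.inr hx))))
    obtain ⟨wb, hwb⟩ := hlift _ (hmem (B y) (fun x hx => Or.inl (Or.inr hx)))
    obtain ⟨wbi, hwbi⟩ := hlift _ (hmem ((B y)⁻¹) (fun x hx => Or.inr hx))
    have ha1 : wa * wai = 1 := hιinj (by
      rw [map_mul, hwa, hwai, map_one, ← Units.val_mul, mul_inv_cancel, Units.val_one])
    have hb1 : wb * wbi = 1 := hιinj (by
      rw [map_mul, hwb, hwbi, map_one, ← Units.val_mul, mul_inv_cancel, Units.val_one])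
    refine ⟨wa * wb * wai * wbi, ?_, ?_⟩
    · have ha := hAB y hy
      rw [map_mul, map_mul, map_mul, hwa, hwai, hwb, hwbi]
      conv_rhs => rw [ha]
      rw [commutatorElement_def, Units.val_mul, Units.val_mul, Units.val_mul]
    · have := congrArg delta ha1
      have hb := congrArg delta hb1
      rw [map_mul] at this hb
      rw [map_one] at this hb
      rw [map_mul, map_mul, map_mul]
      calc delta wa * delta wb * delta wai * delta wbi
          = (delta wa * delta wai) * (delta wb * delta wbi) := by ring
        _ = 1 := by rw [this, hb, one_mul]
  -- lift of the whole product
  have main : ∀ l' : List (Matrix (Fin n) (Fin n) D)ˣ, (∀ y ∈ l', ∃ w : Matrix (Fin n) (Fin n) K,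
      ι w = y.val ∧ delta w = 1) →
      ∃ w : Matrix (Fin n) (Fin n) K,
        ι w = ((l'.map (fun y : (Matrix (Fin n) (Fin n) D)ˣ => (y.val : Matrix (Fin n) (Fin n) D))).prod) ∧ delta w = 1 := by
    intro l'
    induction l' with
    | nil => exact fun _ => ⟨1, by simp, map_one _⟩
    | cons y t ih =>
      intro h
      obtain ⟨wy, hwy1, hwy2⟩ := h y List.mem_cons_self
      obtain ⟨wt, hwt1, hwt2⟩ := ih fun x hx => h x (List.mem_cons_of_mem _ hx)
      exact ⟨wy * wt, by rw [map_mul, hwy1, hwt1, List.map_cons, List.prod_cons],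
        by rw [map_mul, hwy2, hwt2, one_mul]⟩
  obtain ⟨w, hw1, hw2⟩ := main l key
  have hzval : ((l.map (fun y : (Matrix (Fin n) (Fin n) D)ˣ => (y.val : Matrix (Fin n) (Fin n) D))).prod) = d • 1 := by
    rw [← hzv, ← hlprod]
    exact (map_list_prod (Units.coeHom (Matrix (Fin n) (Fin n) D)) l).symm
  rw [hzval] at hw1
  -- identify w with the scalar matrix over K
  set dK : K := ⟨d, hdK⟩ with hdKdef
  have hdKc : dK ∈ Subring.center K := by
    rw [Subring.mem_center_iff]
    intro g
    exact Subtype.ext ((Subring.mem_center_iff.mp hd) g.1)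
  have hwsc : w = dK • (1 : Matrix (Fin n) (Fin n) K) := by
    apply hιinj
    rw [hw1]
    ext i j
    simp [ι, Matrix.map_apply, Matrix.smul_apply, Matrix.one_apply]
    split <;> simp [dK]
  rw [hwsc, delta_smul_one dK hdKc] at hw2
  set m := Module.finrank (Subring.center K) (Matrix (Fin n) (Fin n) K) with hmdef
  have hmpos : 0 < m := by
    haveI : Nonempty (Fin n) := ⟨⟨0, hn⟩⟩
    exact Module.finrank_pos
  refine ⟨m, hmpos, ?_⟩
  have : (dK : K) ^ m = 1 := by
    have := congrArg (fun x : Subring.center K => (x : K)) hw2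
    simpa using this
  have := congrArg (fun x : K => (x : D)) this
  simpa using this

/-- Let `D` be a non-commutative weakly locally finite division ring of
characteristic 0 with center `F`. Then no subgroup `N` of `GL_n(D)` containing
all scalar matrices `d • I` with `d ∈ F*` is finitely generated. -/
theorem stmt_16 (D : Type*) [DivisionRing D] [CharZero D]
    (hD : IsWeaklyLocallyFinite D) (hnc : ¬ ∀ a b : D, a * b = b * a)
    (n : ℕ) (hn : 0 < n)
    (N : Subgroup (Matrix (Fin n) (Fin n) D)ˣ)
    (hscalar : ∀ d : Dˣ, (d : D) ∈ Subring.center D →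
      ∃ A ∈ N, (A : (Matrix (Fin n) (Fin n) D)ˣ).val =
        (d : D) • (1 : Matrix (Fin n) (Fin n) D)) :
    ¬ N.FG := by
  intro hFG
  haveI hNfg : Group.FG N := (Group.fg_iff_subgroup_fg N).mpr hFG
  have hcentral : ∀ r : ℚ, ((r : D)) ∈ Subring.center D := by
    intro r
    rw [Subring.mem_center_iff]
    intro g
    exact ((Rat.cast_commute r g).symm).eq
  let h0 : ℚ →+* Matrix (Fin n) (Fin n) D := (Matrix.scalar (Fin n)).comp (Rat.castHom D)
  let ψ0 : ℚˣ →* (Matrix (Fin n) (Fin n) D)ˣ := Units.map h0.toMonoidHom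
  have hψ0val : ∀ q : ℚˣ, (ψ0 q).val = ((q : ℚ) : D) • (1 : Matrix (Fin n) (Fin n) D) := by
    intro q
    show h0 (q : ℚ) = _
    ext i j
    simp [h0, Matrix.scalar_apply, Matrix.diagonal_apply, Matrix.smul_apply, Matrix.one_apply,
      mul_ite, mul_one, mul_zero]
  have hψ0mem : ∀ q : ℚˣ, ψ0 q ∈ N := by
    intro q
    obtain ⟨Amat, hA, hAval⟩ := hscalar (Units.map (Rat.castHom D).toMonoidHom q)
      (hcentral (q : ℚ))
    have hEq : Amat = ψ0 q := Units.ext (by rw [hAval, hψ0val q]; rfl)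
    rwa [hEq] at hA
  let ψ : ℚˣ →* N := ψ0.codRestrict N hψ0mem
  let g : ℚˣ →* Abelianization N := (Abelianization.of).comp ψ
  haveI : Group.FG (Abelianization N) :=
    Group.fg_of_surjective (f := (Abelianization.of : N →* Abelianization N))
      (fun y => Quotient.inductionOn' y fun a => ⟨a, rfl⟩)
  haveI : Module.Finite ℤ (Additive (Abelianization N)) :=
    Module.Finite.iff_addGroup_fg.mpr inferInstance
  haveI : IsNoetherian ℤ (Additive (Abelianization N)) :=
    isNoetherian_of_isNoetherianRing_of_finite ℤ _
  have hker : ∀ q : ℚˣ, q ∈ g.ker → q = 1 ∨ q = -1 := by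
    intro q hq
    have hψmem : ψ q ∈ commutator N := (QuotientGroup.eq_one_iff ((ψ q : N))).mp hq
    have hmap : ψ0 q ∈ commutator (Matrix (Fin n) (Fin n) D)ˣ := by
      have h1 : ψ0 q ∈ Subgroup.map N.subtype (commutator N) := ⟨ψ q, hψmem, rfl⟩
      have h2 : Subgroup.map N.subtype (commutator N) ≤
          commutator (Matrix (Fin n) (Fin n) D)ˣ := by
        rw [commutator_def, Subgroup.map_commutator]
        exact Subgroup.commutator_mono le_top le_top
      exact h2 h1
    obtain ⟨m, hm, hpow⟩ := torsion_of_scalar_in_commutator hD hn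
      (hcentral (q : ℚ)) (hψ0val q) hmap
    have hq1 : ((q : ℚ)) ^ m = 1 := by
      apply Rat.cast_injective (α := D)
      push_cast
      exact_mod_cast hpow
    rcases (pow_eq_one_iff_of_ne_zero hm.ne').mp hq1 with h1 | ⟨h1, _⟩
    · exact Or.inl (Units.ext h1)
    · exact Or.inr (Units.ext h1)
  have hQfg : Group.FG ℚˣ := by
    rw [GroupFG.iff_add_fg, ← Module.Finite.iff_addGroup_fg, Module.finite_def]
    refine Submodule.fg_of_fg_map_of_fg_inf_ker (MonoidHom.toAdditive g).toIntLinearMap ?_ ?_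
    · exact IsNoetherian.noetherian _
    · rw [inf_of_le_right le_top, AddMonoidHom.coe_toIntLinearMap_ker,
        MonoidHom.coe_toAdditive_ker, Submodule.fg_iff_addSubgroup_fg,
        AddSubgroup.toIntSubmodule_toAddSubgroup, ← AddGroup.fg_iff_addSubgroup_fg]
      haveI : Finite g.ker := by
        refine Set.Finite.to_subtype (Set.Finite.subset
          ((Set.finite_singleton (1 : ℚˣ)).insert (-1 : ℚˣ)) ?_)
        intro q hq
        rcases hker q hq with h | h
        · exact Or.inr (by simpa using h)
        · exact Or.inl h
      have : Finite (Subgroup.toAddSubgroup g.ker) := ‹Finite g.ker›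
      exact AddGroup.fg_of_finite
  exact ratUnits_not_fg hQfg
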